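/- For all positive integers w and h, the real number 2^{(h+w−1)/2} · Re a(h − w, h + w) equals the number of Young diagrams of size w×h with an odd number of steps minus the number of Young diagrams of size w×h with an even number of steps. -/

import Mathlib

open Complex Real Filter Asymptotics

noncomputable section

/-- Number of turns of the checker path with `T` moves whose set of indices of
rightward moves (among moves `0, …, T-1`) is `R`. -/
def turnsOf (T : ℕ) (R : Finset ℕ) : ℕ :=
  ((Finset.Ico 1 T).filter fun i => ¬((i ∈ R) ↔ (i - 1 ∈ R))).card

/-- The Feynman-checkers wave function on the integer lattice, with `μ = m·ε`:
`waveA X T μ = a(X·ε, T·ε, m, ε)`.  A checker path from `(0,0)` to `(X·ε, T·ε)`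
consists of `T` moves, each `(ε,ε)` ("right") or `(-ε,ε)` ("left"); it is
determined by the set `R ⊆ {0,…,T-1}` of indices of its rightward moves.  The
path ends at `X·ε` iff `R.card - (T - R.card) = X`, and its second point is
`(ε,ε)` iff `0 ∈ R`. -/
def waveA (X : ℤ) (T : ℕ) (μ : ℝ) : ℂ :=
  (((1 + μ ^ 2) ^ ((1 - (T : ℝ)) / 2) : ℝ) : ℂ) * Complex.I *
    ∑ R ∈ (Finset.range T).powerset,
      if 0 ∈ R ∧ 2 * (R.card : ℤ) - (T : ℤ) = X then
        (-Complex.I * (μ : ℂ)) ^ turnsOf T R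
      else 0

/-- The wave function `a(x, t, m, ε)` for lattice points `(x,t) ∈ εℤ²`. -/
def wf (x t m ε : ℝ) : ℂ := waveA ⌊x / ε⌋ ⌊t / ε⌋.toNat (m * ε)

/-- `ã₁(x, t, m, ε) = Re a(x, t+ε, m, ε)`. -/
def a1 (x t m ε : ℝ) : ℝ := (wf x (t + ε) m ε).re

/-- `ã₂(x, t, m, ε) = Im a(x+ε, t+ε, m, ε)`. -/
def a2 (x t m ε : ℝ) : ℝ := (wf (x + ε) (t + ε) m ε).im

end

/-- `f : Fin h → ℕ` encodes a Young diagram of size `w × h`: a nondecreasing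
sequence of positive integers `x₁ ≤ … ≤ x_h` with `x_h = w` (equivalently, for
a monotone sequence: all values are `≤ w` and the value `w` is attained). -/
def IsYoungDiagram (w : ℕ) {h : ℕ} (f : Fin h → ℕ) : Prop :=
  Monotone f ∧ (∀ i, 1 ≤ f i) ∧ (∀ i, f i ≤ w) ∧ (∃ i, f i = w)

/-- The number of steps of a Young diagram: the number of distinct values
among `x₁, …, x_h`. -/
def numSteps {h : ℕ} (f : Fin h → ℕ) : ℕ := (Finset.univ.image f).card

/-- The number of Young diagrams of size `w × h` whose number of steps
satisfies the predicate `p`. -/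
noncomputable def youngCount (w h : ℕ) (p : ℕ → Prop) : ℕ :=
  Nat.card {f : Fin h → ℕ // IsYoungDiagram w f ∧ p (numSteps f)}


namespace S13
open Finset

def inCt (T : ℕ) (R : Finset ℕ) : ℕ :=
  ((Finset.Ico 1 T).filter fun i => i ∈ R ∧ i - 1 ∉ R).card

def outCt (T : ℕ) (R : Finset ℕ) : ℕ :=
  ((Finset.Ico 1 T).filter fun i => i ∉ R ∧ i - 1 ∈ R).card

lemma turnsOf_eq (T : ℕ) (R : Finset ℕ) : turnsOf T R = inCt T R + outCt T R := by
  classical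
  rw [turnsOf, inCt, outCt, ← Finset.card_union_of_disjoint, ← Finset.filter_or]
  · apply Finset.card_nbij id (fun a ha => ?_) (Set.injOn_id _) (fun a ha => ⟨a, ?_, rfl⟩)
    · simp only [mem_filter, mem_coe] at ha ⊢; tauto
    · simp only [Finset.coe_filter, Set.mem_setOf_eq] at ha ⊢; tauto
  · rw [Finset.disjoint_filter]
    tauto

lemma telescope (R : Finset ℕ) : ∀ T, 0 < T →
    (inCt T R : ℤ) + (if 0 ∈ R then 1 else 0) =
      outCt T R + (if T - 1 ∈ R then 1 else 0) := by
  intro T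
  induction T with
  | zero => omega
  | succ T ih =>
    intro _
    rcases Nat.eq_zero_or_pos T with rfl | hT
    · simp [inCt, outCt]
    have hIco : Finset.Ico 1 (T + 1) = insert T (Finset.Ico 1 T) := by
      rw [Nat.Ico_succ_right_eq_insert_Ico (by omega)]
    have hnot : T ∉ Finset.Ico 1 T := by simp
    have hin : inCt (T+1) R = inCt T R + (if T ∈ R ∧ T - 1 ∉ R then 1 else 0) := by
      rw [inCt, inCt, hIco, Finset.filter_insert]
      split <;> simp_all [Finset.card_insert_of_notMem, Finset.mem_filter]
    have hout : outCt (T+1) R = outCt T R + (if T ∉ R ∧ T - 1 ∈ R then 1 else 0) := by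
      rw [outCt, outCt, hIco, Finset.filter_insert]
      split <;> simp_all [Finset.card_insert_of_notMem, Finset.mem_filter]
    have := ih hT
    simp only [Nat.add_sub_cancel]
    by_cases h1 : T ∈ R <;> by_cases h2 : T - 1 ∈ R <;>
      simp [hin, hout, h1, h2] at this ⊢ <;> omega


lemma re_even (m : ℕ) : (Complex.I * (-Complex.I)^(2*m)).re = 0 := by
  rw [pow_mul]
  have h2 : (-Complex.I)^2 = -1 := by rw [neg_pow, Complex.I_sq]; ring
  rw [h2]
  rcases Nat.even_or_odd m with he | ho
  · rw [he.neg_one_pow]; simp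
  · rw [ho.neg_one_pow]; simp

lemma re_odd (A : ℕ) :
    (Complex.I * (-Complex.I)^(2*A+1)).re = if Even A then 1 else -1 := by
  rw [pow_succ, pow_mul]
  have h2 : (-Complex.I)^2 = -1 := by rw [neg_pow, Complex.I_sq]; ring
  rw [h2]
  rcases Nat.even_or_odd A with he | ho
  · rw [he.neg_one_pow, if_pos he]; simp [Complex.I_mul_I]
  · rw [ho.neg_one_pow, if_neg (Nat.not_even_iff_odd.mpr ho)]
    simp [Complex.I_mul_I]

lemma turns_odd {T : ℕ} {R : Finset ℕ} (hT : 0 < T) (h0 : 0 ∈ R) (hl : T - 1 ∉ R) :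
    turnsOf T R = 2 * inCt T R + 1 := by
  have ht := telescope R T hT
  rw [if_pos h0, if_neg hl] at ht
  have h2 := turnsOf_eq T R
  omega

lemma turns_even_re {T : ℕ} {R : Finset ℕ} (hT : 0 < T) (h0 : 0 ∈ R) (hl : T - 1 ∈ R) :
    (Complex.I * (-Complex.I)^(turnsOf T R)).re = 0 := by
  have ht := telescope R T hT
  rw [if_pos h0, if_pos hl] at ht
  have h2 := turnsOf_eq T R
  have he : turnsOf T R = 2 * inCt T R := by omega
  rw [he]
  exact re_even _

def gext (h : ℕ) (f : Fin h → ℕ) : ℕ → ℕ := fun j =>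
  if hh : 0 < h then f ⟨min j (h-1), by omega⟩ else 0

variable {w h : ℕ} {f : Fin h → ℕ}

lemma gext_eq (hh : 0 < h) {j : ℕ} (hj : j < h) : gext h f j = f ⟨j, hj⟩ := by
  simp only [gext, dif_pos hh]
  congr 1
  exact Fin.ext (by simp; omega)

lemma gext_mono (hh : 0 < h) (hf : Monotone f) : Monotone (gext h f) := by
  intro a b hab
  simp only [gext, dif_pos hh]
  exact hf (by simp only [Fin.mk_le_mk]; omega)

lemma gext_pos (hh : 0 < h) (hf : IsYoungDiagram w f) (j : ℕ) : 1 ≤ gext h f j := by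
  simp only [gext, dif_pos hh]; exact hf.2.1 _

lemma gext_le (hh : 0 < h) (hf : IsYoungDiagram w f) (j : ℕ) : gext h f j ≤ w := by
  simp only [gext, dif_pos hh]; exact hf.2.2.1 _

lemma gext_top (hh : 0 < h) (hf : IsYoungDiagram w f) {j : ℕ} (hj : h - 1 ≤ j) :
    gext h f j = w := by
  obtain ⟨i, hi⟩ := hf.2.2.2
  simp only [gext, dif_pos hh]
  refine le_antisymm (hf.2.2.1 _) ?_
  calc w = f i := hi.symm
    _ ≤ f ⟨min j (h-1), by omega⟩ := hf.1 (by simp only [Fin.le_def]; simp; omega)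

lemma steps_count (g : ℕ → ℕ) (hg : Monotone g) : ∀ n,
    ((Finset.range (n+1)).image g).card
      = 1 + ((Finset.range n).filter fun j => g j < g (j+1)).card := by
  intro n
  induction n with
  | zero => simp
  | succ n ih =>
    rw [Finset.range_add_one, Finset.image_insert]
    conv_rhs => rw [Finset.range_add_one, Finset.filter_insert]
    by_cases hmem : g (n+1) ∈ (Finset.range (n+1)).image g
    · have heq : ¬ g n < g (n+1) := by
        obtain ⟨j, hj, e⟩ := Finset.mem_image.mp hmem
        have hj' : j ≤ n := by simpa [Nat.lt_succ_iff] using hj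
        have h1 : g (n+1) ≤ g n := e ▸ hg hj'
        omega
      rw [Finset.insert_eq_self.mpr hmem, if_neg heq, ih]
    · have hlt : g n < g (n+1) := by
        have h1 : g n ≤ g (n+1) := hg (by omega)
        rcases eq_or_lt_of_le h1 with he | hlt
        · exact absurd (Finset.mem_image.mpr ⟨n, by simp, he⟩) hmem
        · exact hlt
      rw [Finset.card_insert_of_notMem hmem, if_pos hlt,
        Finset.card_insert_of_notMem (by simp), ih]
      omega

lemma numSteps_eq (hh : 0 < h) (hf : Monotone f) :
    numSteps f
      = 1 + ((Finset.range (h-1)).filter fun j => gext h f j < gext h f (j+1)).card := by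
  have himg : Finset.univ.image f = (Finset.range h).image (gext h f) := by
    ext x
    simp only [Finset.mem_image, Finset.mem_univ, true_and, Finset.mem_range]
    constructor
    · rintro ⟨i, rfl⟩
      exact ⟨i, i.isLt, (gext_eq hh i.isLt).trans (by congr 1)⟩
    · rintro ⟨j, hj, rfl⟩
      exact ⟨⟨j, hj⟩, (gext_eq hh hj).symm⟩
  rw [numSteps, himg]
  have := steps_count (gext h f) (gext_mono hh hf) (h-1)
  have h1 : h - 1 + 1 = h := by omega
  rwa [h1] at this

def rseq (w h : ℕ) (f : Fin h → ℕ) (k : ℕ) : ℕ := w + k - gext h f (h - 1 - k)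

def psi (w h : ℕ) (f : Fin h → ℕ) : Finset ℕ := (Finset.range h).image (rseq w h f)

section
variable (hh : 0 < h) (hf : IsYoungDiagram w f)
include hh hf

lemma rseq_zero : rseq w h f 0 = 0 := by
  have ht := gext_top hh hf (j := h - 1 - 0) (by omega)
  simp only [rseq, Nat.add_zero, ht, Nat.sub_self]

lemma rseq_lt {k1 k2 : ℕ} (hk : k1 < k2) : rseq w h f k1 < rseq w h f k2 := by
  have h1 := gext_mono hh hf.1 (show h - 1 - k2 ≤ h - 1 - k1 by omega)
  have h2 := gext_le hh hf (h - 1 - k1)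
  have h3 := gext_pos hh hf (h - 1 - k2)
  have h4 := gext_pos hh hf (h - 1 - k1)
  simp only [rseq] at *
  omega

lemma rseq_bounds (k : ℕ) : k ≤ rseq w h f k ∧ rseq w h f k ≤ w + k - 1 := by
  have h2 := gext_le hh hf (h - 1 - k)
  have h3 := gext_pos hh hf (h - 1 - k)
  simp only [rseq]
  omega

lemma psi_card : (psi w h f).card = h := by
  rw [psi, Finset.card_image_of_injOn, Finset.card_range]
  intro a _ b _ hab
  by_contra hne
  rcases Nat.lt_or_ge a b with hlt | hge
  · exact absurd hab (Nat.ne_of_lt (rseq_lt hh hf hlt))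
  · exact absurd hab.symm (Nat.ne_of_lt (rseq_lt hh hf (by omega)))

lemma zero_mem_psi : 0 ∈ psi w h f := by
  rw [psi, Finset.mem_image]
  exact ⟨0, by simp [hh], rseq_zero hh hf⟩

lemma psi_subset : psi w h f ⊆ Finset.range (h + w) := by
  intro x hx
  rw [psi, Finset.mem_image] at hx
  obtain ⟨k, hk, rfl⟩ := hx
  rw [Finset.mem_range] at hk ⊢
  have := (rseq_bounds hh hf k).2
  omega

lemma last_not_mem_psi : h + w - 1 ∉ psi w h f := by
  rw [psi, Finset.mem_image]
  rintro ⟨k, hk, he⟩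
  rw [Finset.mem_range] at hk
  have hw1 : 1 ≤ w := le_trans (gext_pos hh hf 0) (gext_le hh hf 0)
  have hb := (rseq_bounds hh hf k).2
  rw [he] at hb
  omega

lemma mem_psi {x : ℕ} : x ∈ psi w h f ↔ ∃ k < h, rseq w h f k = x := by
  rw [psi, Finset.mem_image]
  simp [Finset.mem_range]

lemma inCt_psi :
    inCt (h + w) (psi w h f)
      = ((Finset.range (h-1)).filter fun j => gext h f j < gext h f (j+1)).card := by
  rw [inCt]
  refine (Finset.card_bij (i := fun j _ => rseq w h f (h - 1 - j)) ?_ ?_ ?_).symm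
  · -- maps into
    intro j hj
    rw [Finset.mem_filter, Finset.mem_range] at hj
    obtain ⟨hjr, hjasc⟩ := hj
    have hk1 : 1 ≤ h - 1 - j := by omega
    have hb := rseq_bounds hh hf (h - 1 - j)
    have hw1 : 1 ≤ w := le_trans (gext_pos hh hf 0) (gext_le hh hf 0)
    rw [Finset.mem_filter, Finset.mem_Ico]
    refine ⟨⟨by omega, by omega⟩, (mem_psi hh hf).mpr ⟨h - 1 - j, by omega, rfl⟩, ?_⟩
    rw [mem_psi hh hf]
    rintro ⟨m, hm, he⟩
    have hmk : m < h - 1 - j := by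
      by_contra hge
      rcases Nat.eq_or_lt_of_le (Nat.le_of_not_lt hge) with heq | hlt
      · rw [heq] at he hb hk1; omega
      · have := rseq_lt hh hf hlt; omega
    have h5 : rseq w h f m ≤ rseq w h f (h - 1 - j - 1) := by
      rcases Nat.eq_or_lt_of_le (show m ≤ h - 1 - j - 1 by omega) with heq | hlt
      · rw [heq]
      · exact le_of_lt (rseq_lt hh hf hlt)
    have h7 : rseq w h f (h - 1 - j) - 1 ≤ rseq w h f (h - 1 - j - 1) := by omega
    have e1 : h - 1 - (h - 1 - j - 1) = j + 1 := by omega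
    have e2 : h - 1 - (h - 1 - j) = j := by omega
    have b1 := gext_le hh hf (j+1)
    have b2 := gext_pos hh hf (j+1)
    have b3 := gext_le hh hf j
    have b4 := gext_pos hh hf j
    simp only [rseq, e1, e2] at h7 hb
    omega
  · -- injective
    intro j1 hj1 j2 hj2 he
    rw [Finset.mem_filter, Finset.mem_range] at hj1 hj2
    by_contra hne
    rcases Nat.lt_or_ge (h - 1 - j1) (h - 1 - j2) with hlt | hge
    · exact absurd he (Nat.ne_of_lt (rseq_lt hh hf hlt))
    · rcases Nat.eq_or_lt_of_le hge with heq | hlt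
      · omega
      · exact absurd he.symm (Nat.ne_of_lt (rseq_lt hh hf hlt))
  · -- surjective
    intro i hi
    rw [Finset.mem_filter, Finset.mem_Ico] at hi
    obtain ⟨⟨hi1, hi2⟩, hmem, hnot⟩ := hi
    obtain ⟨k, hkh, hke⟩ := (mem_psi hh hf).mp hmem
    have hz := rseq_zero hh hf
    have hk0 : k ≠ 0 := by rintro rfl; omega
    have h5 : rseq w h f (k-1) < rseq w h f k := rseq_lt hh hf (by omega)
    have h6 : rseq w h f (k-1) ≠ i - 1 := fun he =>
      hnot ((mem_psi hh hf).mpr ⟨k-1, by omega, he⟩)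
    refine ⟨h - 1 - k, ?_, ?_⟩
    · rw [Finset.mem_filter, Finset.mem_range]
      have e1 : h - 1 - (k-1) = h - 1 - k + 1 := by omega
      have b1 := gext_le hh hf (h - 1 - k + 1)
      have b2 := gext_pos hh hf (h - 1 - k)
      have b3 := gext_le hh hf (h - 1 - k)
      have b4 := gext_pos hh hf (h - 1 - k + 1)
      simp only [rseq, e1] at h5 h6 hke
      constructor
      · omega
      · omega
    · have e3 : h - 1 - (h - 1 - k) = k := by omega
      rw [e3]
      exact hke


end

/-- gap estimate for strictly monotone `e : Fin h → ℕ`. -/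
lemma gap {e : Fin h → ℕ} (he : StrictMono e) :
    ∀ (d : ℕ) (i j : Fin h), (j : ℕ) = (i : ℕ) + d → e i + d ≤ e j := by
  intro d
  induction d with
  | zero => intro i j hij; have : i = j := Fin.ext (by omega); simp [this]
  | succ d ih =>
    intro i j hij
    have hj' : (i : ℕ) + d < h := by have := j.isLt; omega
    have h1 := ih i ⟨(i : ℕ) + d, hj'⟩ rfl
    have h2 : e ⟨(i : ℕ) + d, hj'⟩ < e j := he (by rw [Fin.lt_def]; simp; omega)
    omega

lemma numSteps_inCt (hh : 0 < h) (hf : IsYoungDiagram w f) :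
    numSteps f = inCt (h + w) (psi w h f) + 1 := by
  rw [numSteps_eq hh hf.1, inCt_psi hh hf]; omega

lemma psi_inj {f' : Fin h → ℕ} (hh : 0 < h) (hf : IsYoungDiagram w f)
    (hf' : IsYoungDiagram w f') (he : psi w h f = psi w h f') : f = f' := by
  have hcard : (psi w h f).card = h := psi_card hh hf
  have hsm : StrictMono (fun k : Fin h => rseq w h f (k : ℕ)) := by
    intro a b hab; exact rseq_lt hh hf hab
  have hsm' : StrictMono (fun k : Fin h => rseq w h f' (k : ℕ)) := by
    intro a b hab; exact rseq_lt hh hf' hab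
  have h1 := Finset.orderEmbOfFin_unique hcard
    (f := fun k : Fin h => rseq w h f (k : ℕ))
    (fun x => (mem_psi hh hf).mpr ⟨x, x.isLt, rfl⟩) hsm
  have h2 := Finset.orderEmbOfFin_unique hcard
    (f := fun k : Fin h => rseq w h f' (k : ℕ))
    (fun x => he ▸ (mem_psi hh hf').mpr ⟨x, x.isLt, rfl⟩) hsm'
  have hr : ∀ k : Fin h, rseq w h f (k : ℕ) = rseq w h f' (k : ℕ) := fun k =>
    (congrFun h1 k).trans (congrFun h2 k).symm
  funext i
  have hk : h - 1 - (h - 1 - (i : ℕ)) = (i : ℕ) := by have := i.isLt; omega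
  have hkh : h - 1 - (i : ℕ) < h := by have := i.isLt; omega
  have := hr ⟨h - 1 - (i : ℕ), hkh⟩
  simp only [rseq, hk] at this
  rw [gext_eq hh i.isLt, gext_eq hh i.isLt] at this
  have e1 : f ⟨(i:ℕ), i.isLt⟩ = f i := by congr 1
  have e2 : f' ⟨(i:ℕ), i.isLt⟩ = f' i := by congr 1
  rw [e1, e2] at this
  have b1 := hf.2.2.1 i
  have b2 := hf'.2.2.1 i
  have b3 := hf.2.1 i
  have b4 := hf'.2.1 i
  omega

def phi (w h : ℕ) (e : Fin h → ℕ) : Fin h → ℕ :=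
  fun i => w + (h - 1 - (i : ℕ)) - e ⟨h - 1 - (i : ℕ), by have := i.isLt; omega⟩

lemma psi_surj (hh : 0 < h) (hw : 0 < w) {R : Finset ℕ}
    (hsub : R ⊆ Finset.range (h + w)) (h0 : 0 ∈ R) (hcard : R.card = h)
    (hlast : h + w - 1 ∉ R) :
    ∃ f : Fin h → ℕ, IsYoungDiagram w f ∧ psi w h f = R := by
  have hsm : StrictMono ⇑(R.orderEmbOfFin hcard) := (R.orderEmbOfFin hcard).strictMono
  have hmem : ∀ i, (R.orderEmbOfFin hcard) i ∈ R := fun i => R.orderEmbOfFin_mem hcard i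
  have he0 : (R.orderEmbOfFin hcard) ⟨0, hh⟩ = 0 := by
    have h1 : (R.orderEmbOfFin hcard) ⟨0, hh⟩ ≤ 0 := by
      have h3 := Finset.min'_le R 0 h0
      have h2 := Finset.orderEmbOfFin_zero hcard hh
      rw [h2]; exact h3
    omega
  have hub : ∀ i : Fin h, (R.orderEmbOfFin hcard) i ≤ w + (i : ℕ) - 1 := by
    intro i
    have hlt : (h - 1 : ℕ) < h := by omega
    have h1 := gap hsm (h - 1 - (i : ℕ)) i ⟨h - 1, hlt⟩ (by simp; have := i.isLt; omega)
    have h2 : (R.orderEmbOfFin hcard) ⟨h - 1, hlt⟩ ∈ Finset.range (h + w) := hsub (hmem _)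
    rw [Finset.mem_range] at h2
    have h3 : (R.orderEmbOfFin hcard) ⟨h - 1, hlt⟩ ≠ h + w - 1 := fun hc => hlast (hc ▸ hmem _)
    have := i.isLt
    omega
  have hlb : ∀ i : Fin h, (i : ℕ) ≤ (R.orderEmbOfFin hcard) i := by
    intro i
    have h1 := gap hsm (i : ℕ) ⟨0, hh⟩ i (by simp)
    rw [he0] at h1
    omega
  have hY : IsYoungDiagram w (phi w h ⇑(R.orderEmbOfFin hcard)) := by
    refine ⟨?_, ?_, ?_, ?_⟩
    · intro i i' hii'
      have hii : (i : ℕ) ≤ (i' : ℕ) := hii'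
      have hji' : h - 1 - (i' : ℕ) < h := by omega
      have hji : h - 1 - (i : ℕ) < h := by omega
      have h1 := gap hsm (h - 1 - (i : ℕ) - (h - 1 - (i' : ℕ)))
        ⟨h - 1 - (i' : ℕ), hji'⟩ ⟨h - 1 - (i : ℕ), hji⟩ (by simp; have := i.isLt; omega)
      have h2 := hub ⟨h - 1 - (i : ℕ), hji⟩
      have h3 := hlb ⟨h - 1 - (i' : ℕ), hji'⟩
      simp only [phi]
      have := i.isLt
      omega
    · intro i
      have h2 : (R.orderEmbOfFin hcard) (⟨h - 1 - (i : ℕ), by have := i.isLt; omega⟩ : Fin h)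
          ≤ w + (h - 1 - (i : ℕ)) - 1 := hub _
      simp only [phi]
      have := i.isLt
      omega
    · intro i
      have h3 := hlb (⟨h - 1 - (i : ℕ), by have := i.isLt; omega⟩ : Fin h)
      rw [Fin.val_mk] at h3
      simp only [phi]
      omega
    · refine ⟨⟨h - 1, by omega⟩, ?_⟩
      simp only [phi]
      have e1 : (⟨h - 1 - (⟨h - 1, by omega⟩ : Fin h) , by omega⟩ : Fin h) = ⟨0, hh⟩ :=
        Fin.ext (by simp)
      rw [e1, he0]
      omega
  refine ⟨phi w h ⇑(R.orderEmbOfFin hcard), hY, ?_⟩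
  have hrs : ∀ k, ∀ hk : k < h, rseq w h (phi w h ⇑(R.orderEmbOfFin hcard)) k = (R.orderEmbOfFin hcard) ⟨k, hk⟩ := by
    intro k hk
    rw [rseq, gext_eq hh (show h - 1 - k < h by omega)]
    simp only [phi]
    have hkk : h - 1 - (h - 1 - k) = k := by omega
    have e1 : (⟨h - 1 - ((⟨h - 1 - k, by omega⟩ : Fin h) : ℕ), by omega⟩ : Fin h)
        = ⟨k, hk⟩ := Fin.ext (by simp [hkk])
    rw [e1]
    have h2 := hub ⟨k, hk⟩
    simp only at h2 ⊢
    omega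
  apply Finset.eq_of_subset_of_card_le
  · intro x hx
    rw [psi, Finset.mem_image] at hx
    obtain ⟨k, hk, rfl⟩ := hx
    rw [Finset.mem_range] at hk
    rw [hrs k hk]
    exact hmem _
  · rw [psi_card hh hY, hcard]

lemma youngCount_eq {w h : ℕ} (hh : 0 < h) (hw : 0 < w) (p : ℕ → Prop)
    [DecidablePred p] :
    youngCount w h p =
      (((Finset.range (h + w)).powerset.filter
          (fun R => (0 ∈ R ∧ R.card = h) ∧ h + w - 1 ∉ R)).filter
        (fun R => p (inCt (h + w) R + 1))).card := by
  rw [youngCount, ← Nat.card_eq_finsetCard]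
  have hmem : ∀ x : {f : Fin h → ℕ // IsYoungDiagram w f ∧ p (numSteps f)},
      psi w h x.1 ∈ ((Finset.range (h + w)).powerset.filter
          (fun R => (0 ∈ R ∧ R.card = h) ∧ h + w - 1 ∉ R)).filter
        (fun R => p (inCt (h + w) R + 1)) := by
    intro x
    rw [Finset.mem_filter, Finset.mem_filter, Finset.mem_powerset]
    refine ⟨⟨psi_subset hh x.2.1, ⟨zero_mem_psi hh x.2.1, psi_card hh x.2.1⟩,
      last_not_mem_psi hh x.2.1⟩, ?_⟩
    rw [← numSteps_inCt hh x.2.1]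
    exact x.2.2
  refine Nat.card_congr (Equiv.ofBijective (fun x => ⟨psi w h x.1, hmem x⟩) ⟨?_, ?_⟩)
  · intro a b hab
    have h1 : psi w h a.1 = psi w h b.1 := congrArg Subtype.val hab
    exact Subtype.ext (psi_inj hh a.2.1 b.2.1 h1)
  · rintro ⟨R, hR⟩
    rw [Finset.mem_filter, Finset.mem_filter, Finset.mem_powerset] at hR
    obtain ⟨⟨hsub, ⟨h0, hcard⟩, hlast⟩, hp⟩ := hR
    obtain ⟨f, hf, hpsi⟩ := psi_surj hh hw hsub h0 hcard hlast
    refine ⟨⟨f, hf, ?_⟩, Subtype.ext hpsi⟩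
    rw [numSteps_inCt hh hf, hpsi]
    exact hp

end S13

theorem stmt13 (w h : ℕ) (hw : 0 < w) (hh : 0 < h) :
    (2 : ℝ) ^ (((h : ℝ) + (w : ℝ) - 1) / 2) *
        (wf ((h : ℝ) - (w : ℝ)) ((h : ℝ) + (w : ℝ)) 1 1).re =
      (youngCount w h Odd : ℝ) - (youngCount w h Even : ℝ) := by
  classical
  have hwf : wf ((h : ℝ) - (w : ℝ)) ((h : ℝ) + (w : ℝ)) 1 1
      = waveA ((h : ℤ) - (w : ℤ)) (h + w) 1 := by
    have e1 : ⌊((h:ℝ) - (w:ℝ))/1⌋ = (h:ℤ) - (w:ℤ) := by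
      rw [div_one, show ((h:ℝ) - (w:ℝ)) = (((h:ℤ) - (w:ℤ) : ℤ) : ℝ) by push_cast; ring]
      exact Int.floor_intCast _
    have e2 : (⌊((h:ℝ) + (w:ℝ))/1⌋).toNat = h + w := by
      rw [div_one, show ((h:ℝ) + (w:ℝ)) = (((h:ℤ) + (w:ℤ) : ℤ) : ℝ) by push_cast; ring,
        Int.floor_intCast]
      omega
    rw [wf, e1, e2, mul_one]
  rw [hwf, waveA]
  have hbase : (1 + (1:ℝ)^2) = 2 := by norm_num
  rw [hbase, mul_assoc, Complex.re_ofReal_mul, ← mul_assoc]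
  have hpow : (2:ℝ) ^ (((h : ℝ) + (w : ℝ) - 1) / 2) *
      (2:ℝ) ^ ((1 - ((h + w : ℕ) : ℝ)) / 2) = 1 := by
    rw [← Real.rpow_add (by norm_num : (0:ℝ) < 2)]
    rw [show ((h : ℝ) + (w : ℝ) - 1) / 2 + (1 - ((h + w : ℕ) : ℝ)) / 2 = 0 by
      push_cast; ring]
    exact Real.rpow_zero 2
  rw [hpow, one_mul, Complex.ofReal_one, mul_one, Finset.mul_sum, Complex.re_sum]
  simp only [mul_ite, mul_zero, apply_ite Complex.re, Complex.zero_re]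
  rw [← Finset.sum_filter]
  have hfc : (Finset.range (h + w)).powerset.filter
        (fun R => 0 ∈ R ∧ 2*(R.card:ℤ) - ((h + w : ℕ) : ℤ) = (h:ℤ) - (w:ℤ))
      = (Finset.range (h + w)).powerset.filter (fun R => 0 ∈ R ∧ R.card = h) := by
    apply Finset.filter_congr
    intro R hR
    rw [Finset.mem_powerset] at hR
    have hcle : R.card ≤ h + w := le_trans (Finset.card_le_card hR) (by simp)
    constructor
    · rintro ⟨h1, h2⟩; exact ⟨h1, by omega⟩
    · rintro ⟨h1, h2⟩; exact ⟨h1, by omega⟩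
  rw [hfc]
  rw [← Finset.sum_filter_of_ne (p := fun R => h + w - 1 ∉ R)
    (fun R hR hv => by
      by_contra hmem
      rw [Finset.mem_filter] at hR
      have hmem' : h + w - 1 ∈ R := by tauto
      exact hv (S13.turns_even_re (by omega) hR.2.1 hmem')), Finset.filter_filter]
  set Y := (Finset.range (h + w)).powerset.filter
    (fun R => (0 ∈ R ∧ R.card = h) ∧ h + w - 1 ∉ R) with hY
  rw [← Finset.sum_filter_add_sum_filter_not Y (fun R => Odd (S13.inCt (h + w) R + 1))]
  have hsum1 : ∑ R ∈ Y.filter (fun R => Odd (S13.inCt (h + w) R + 1)),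
      (Complex.I * (-Complex.I) ^ turnsOf (h + w) R).re
      = ((Y.filter (fun R => Odd (S13.inCt (h + w) R + 1))).card : ℝ) := by
    rw [Finset.sum_congr rfl (g := fun _ => (1:ℝ)) (fun R hR => ?_), Finset.sum_const,
      nsmul_eq_mul, mul_one]
    rw [Finset.mem_filter, hY, Finset.mem_filter] at hR
    obtain ⟨⟨hpow2, ⟨h0, hcard⟩, hlast⟩, hq⟩ := hR
    rw [S13.turns_odd (by omega) h0 hlast, S13.re_odd,
      if_pos (by rwa [Nat.odd_add_one, Nat.not_odd_iff_even] at hq)]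
  have hsum2 : ∑ R ∈ Y.filter (fun R => ¬ Odd (S13.inCt (h + w) R + 1)),
      (Complex.I * (-Complex.I) ^ turnsOf (h + w) R).re
      = -((Y.filter (fun R => ¬ Odd (S13.inCt (h + w) R + 1))).card : ℝ) := by
    rw [Finset.sum_congr rfl (g := fun _ => (-1:ℝ)) (fun R hR => ?_), Finset.sum_const,
      nsmul_eq_mul, mul_neg_one]
    rw [Finset.mem_filter, hY, Finset.mem_filter] at hR
    obtain ⟨⟨hpow2, ⟨h0, hcard⟩, hlast⟩, hq⟩ := hR
    rw [S13.turns_odd (by omega) h0 hlast, S13.re_odd,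
      if_neg (by rwa [Nat.odd_add_one, Decidable.not_not, ← Nat.not_even_iff_odd] at hq)]
  rw [hsum1, hsum2]
  have hyo : youngCount w h Odd
      = (Y.filter (fun R => Odd (S13.inCt (h + w) R + 1))).card :=
    S13.youngCount_eq hh hw Odd
  have hye : youngCount w h Even
      = (Y.filter (fun R => ¬ Odd (S13.inCt (h + w) R + 1))).card := by
    rw [S13.youngCount_eq hh hw Even]
    congr 1
    apply Finset.filter_congr
    intro R _
    rw [Nat.not_odd_iff_even]
  rw [hyo, hye]
  ring
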